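/- If θ : ℝ → ℝ, x : ℝ → ℝ, z : ℝ → ℝ satisfy x'(s) = cos θ(s), z'(s) = sin θ(s), z(s) > 0, and the Weingarten relation a·z(s)·θ'(s) + (a+b)·cos θ(s) = c for all s, and if θ'(s₀) = 0 for some s₀ and a ≠ 0, then θ is constant, so the curve α(s) = (x(s), z(s)) is a straight line. -/

import Mathlib

open Real

lemma fwd_zero (g h : ℝ → ℝ) (hg : ∀ s, HasDerivAt g (h s * g s) s) (hh : Continuous h)
    (s₀ s₁ : ℝ) (hle : s₀ ≤ s₁) (h0 : g s₀ = 0) : g s₁ = 0 := by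
  obtain ⟨K, hK⟩ := (isCompact_Icc (a := s₀) (b := s₁)).exists_bound_of_continuousOn
    hh.continuousOn
  have key := norm_le_gronwallBound_of_norm_deriv_right_le (f := g)
    (f' := fun s => h s * g s) (δ := 0) (K := K) (ε := 0) (a := s₀) (b := s₁)
    (fun s _ => (hg s).continuousAt.continuousWithinAt)
    (fun s _ => (hg s).hasDerivWithinAt)
    (by simp [h0])
    (fun s hs => by
      have := hK s (Set.mem_Icc_of_Ico hs)
      rw [add_zero]
      calc ‖h s * g s‖ = ‖h s‖ * ‖g s‖ := norm_mul _ _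
        _ ≤ K * ‖g s‖ := mul_le_mul_of_nonneg_right this (norm_nonneg _))
  have := key s₁ ⟨hle, le_rfl⟩
  rw [gronwallBound_ε0_δ0] at this
  simpa using le_antisymm this (norm_nonneg _)

lemma zero_of_linear_ode (g h : ℝ → ℝ) (hg : ∀ s, HasDerivAt g (h s * g s) s)
    (hh : Continuous h) (s₀ : ℝ) (h0 : g s₀ = 0) : ∀ s, g s = 0 := by
  intro s
  rcases le_total s₀ s with hle | hle
  · exact fwd_zero g h hg hh s₀ s hle h0
  · have hg' : ∀ t, HasDerivAt (fun t => g (-t)) ((-h (-t)) * g (-t)) t := by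
      intro t
      have := (hg (-t)).comp t (hasDerivAt_neg t)
      simpa [mul_comm, neg_mul, mul_neg, Function.comp_def] using this
    have := fwd_zero (fun t => g (-t)) (fun t => -h (-t)) hg'
      (by continuity) (-s₀) (-s) (neg_le_neg hle) (by simpa using h0)
    simpa using this

/-- If the generating curve of a parabolic linear Weingarten surface
(`a κ₁ + b κ₂ = c`, i.e. `a z θ' + (a+b) cos θ = c`) has `θ'(s₀) = 0` at some
point and `a ≠ 0`, then `θ` is constant, so the curve is a straight line. -/
theorem stmt0 (a b c : ℝ) (θ x z θd : ℝ → ℝ)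
    (hx : ∀ s, HasDerivAt x (Real.cos (θ s)) s)
    (hz : ∀ s, HasDerivAt z (Real.sin (θ s)) s)
    (hθ : ∀ s, HasDerivAt θ (θd s) s)
    (hzpos : ∀ s, 0 < z s)
    (hW : ∀ s, a * z s * θd s + (a + b) * Real.cos (θ s) = c)
    (ha : a ≠ 0) (s₀ : ℝ) (h0 : θd s₀ = 0) :
    ∀ s, θ s = θ s₀ := by
  set g : ℝ → ℝ := fun s => c - (a + b) * Real.cos (θ s) with hgdef
  have haz : ∀ s, a * z s ≠ 0 := fun s => mul_ne_zero ha (hzpos s).ne'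
  have hgeq : ∀ s, g s = a * z s * θd s := fun s => by
    have := hW s; simp only [hgdef]; linarith
  set h : ℝ → ℝ := fun s => (a + b) * Real.sin (θ s) / (a * z s) with hhdef
  have hθd : ∀ s, θd s = g s / (a * z s) := fun s => by
    rw [hgeq s, mul_div_cancel_left₀ _ (haz s)]
  have hg : ∀ s, HasDerivAt g (h s * g s) s := by
    intro s
    have hcos : HasDerivAt (fun s => Real.cos (θ s)) (-Real.sin (θ s) * θd s) s :=
      (Real.hasDerivAt_cos (θ s)).comp s (hθ s)
    have : HasDerivAt g (-((a + b) * (-Real.sin (θ s) * θd s))) s :=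
      ((hcos.const_mul ((a + b))).const_sub c)
    convert this using 1
    rw [hθd s, hhdef]
    field_simp
  have hθcont : Continuous θ := continuous_iff_continuousAt.mpr fun s => (hθ s).continuousAt
  have hzcont : Continuous z := continuous_iff_continuousAt.mpr fun s => (hz s).continuousAt
  have hhcont : Continuous h :=
    ((continuous_const.mul (Real.continuous_sin.comp hθcont)).div
      (continuous_const.mul hzcont) haz)
  have hg0 : g s₀ = 0 := by rw [hgeq s₀, h0]; ring
  have hgzero := zero_of_linear_ode g h hg hhcont s₀ hg0
  have hθd0 : ∀ s, θd s = 0 := fun s => by rw [hθd s, hgzero s, zero_div]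
  intro s
  have hd0 : ∀ t, HasDerivAt θ 0 t := fun t => hθd0 t ▸ hθ t
  exact is_const_of_deriv_eq_zero (fun t => (hd0 t).differentiableAt)
    (fun t => (hd0 t).deriv) s s₀
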